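/- There exists a constant C > 0 such that for every Schwartz function f : ℝ³ → ℝ, ‖f‖_{L^∞(ℝ³)} ≤ C·( Σ_{α∈ℕ³, α₃=0, |α|≤2} ‖∂^α f‖_{L²}² )^{1/4} · ( Σ_{α∈ℕ³, α₃=0, |α|≤2} ‖∂^α ∂₃ f‖_{L²}² )^{1/4}; that is, ‖f‖_{L^∞} ≲ ‖f‖_{H²_tan}^{1/2} ‖∂₃ f‖_{H²_tan}^{1/2}. (Tangential Sobolev embedding repeatedly used in the energy estimates, e.g. for ‖b‖_{L^∞}.) -/

import Mathlib

open MeasureTheory SchwartzMap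
open scoped ENNReal NNReal

noncomputable section

/-- Partial derivative of a Schwartz function on `ℝ³` in the `i`-th coordinate direction. -/
def pd3 (i : Fin 3) (f : SchwartzMap (EuclideanSpace ℝ (Fin 3)) ℝ) :
    SchwartzMap (EuclideanSpace ℝ (Fin 3)) ℝ :=
  LineDeriv.lineDerivOp (EuclideanSpace.single i (1 : ℝ)) f

/-- Iterated tangential partial derivative `∂₁^a ∂₂^b f`. -/
def dtan (a b : ℕ) (f : SchwartzMap (EuclideanSpace ℝ (Fin 3)) ℝ) :
    SchwartzMap (EuclideanSpace ℝ (Fin 3)) ℝ :=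
  (pd3 0)^[a] ((pd3 1)^[b] f)

/-- The `L²` norm (w.r.t. Lebesgue measure on `ℝ³`). -/
def L2 (f : SchwartzMap (EuclideanSpace ℝ (Fin 3)) ℝ) : ℝ :=
  (eLpNorm f 2 volume).toReal

/-- The `L^∞` (essential supremum) norm. -/
def Linf (f : SchwartzMap (EuclideanSpace ℝ (Fin 3)) ℝ) : ℝ :=
  (eLpNorm f ⊤ volume).toReal

/-- Tangential multi-indices `α = (α₁, α₂)` (i.e. `α₃ = 0`) with `|α| ≤ m`. -/
def multiIdx2 (m : ℕ) : Finset (ℕ × ℕ) :=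
  ((Finset.range (m+1)) ×ˢ (Finset.range (m+1))).filter (fun a => a.1 + a.2 ≤ m)

/-- The squared tangential Sobolev norm `‖f‖_{H^k_tan}² = Σ_{α₃=0,|α|≤k} ‖∂^α f‖²`. -/
def HtanSq (k : ℕ) (f : SchwartzMap (EuclideanSpace ℝ (Fin 3)) ℝ) : ℝ :=
  ∑ a ∈ multiIdx2 k, L2 (dtan a.1 a.2 f) ^ 2

/-! ### Auxiliary development -/

abbrev E3 := EuclideanSpace ℝ (Fin 3)
abbrev S3 := SchwartzMap E3 ℝ

/-- Update the `i`-th coordinate of a point of `ℝ³`. -/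
def upd (x : E3) (i : Fin 3) (t : ℝ) : E3 :=
  ((MeasurableEquiv.toLp 2 (Fin 3 → ℝ)).symm).symm
    (Function.update (((MeasurableEquiv.toLp 2 (Fin 3 → ℝ)).symm) x) i t)

lemma upd_self (x : E3) (i : Fin 3) :
    upd x i ((((MeasurableEquiv.toLp 2 (Fin 3 → ℝ)).symm) x) i) = x := by
  simp [upd]

lemma upd_eq_add (x : E3) (i : Fin 3) (t : ℝ) :
    upd x i t
      = x + (t - (((MeasurableEquiv.toLp 2 (Fin 3 → ℝ)).symm) x) i) • EuclideanSpace.single i 1 := by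
  apply ((MeasurableEquiv.toLp 2 (Fin 3 → ℝ)).symm).injective
  ext j
  show Function.update (((MeasurableEquiv.toLp 2 (Fin 3 → ℝ)).symm) x) i t j = _
  rcases eq_or_ne j i with rfl | hj
  · simp [Function.update_self, PiLp.add_apply, PiLp.smul_apply, EuclideanSpace.single_apply]
  · simp [Function.update_of_ne hj, PiLp.add_apply, PiLp.smul_apply,
      EuclideanSpace.single_apply, hj]

lemma abs_le_norm_upd (x : E3) (i : Fin 3) (t : ℝ) : |t| ≤ ‖upd x i t‖ := by
  rw [← Real.sqrt_sq_eq_abs, EuclideanSpace.norm_eq]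
  apply Real.sqrt_le_sqrt
  have h : t ^ 2 = ‖((MeasurableEquiv.toLp 2 (Fin 3 → ℝ)).symm) (upd x i t) i‖ ^ 2 := by
    simp [upd, Real.norm_eq_abs, sq_abs]
  rw [h]
  exact Finset.single_le_sum
    (f := fun j => ‖((MeasurableEquiv.toLp 2 (Fin 3 → ℝ)).symm) (upd x i t) j‖ ^ 2)
    (fun j _ => by positivity) (Finset.mem_univ i)

lemma schwartz_decay_bound (u : S3) :
    ∃ C : ℝ, 0 ≤ C ∧ ∀ y : E3, ‖u y‖ ≤ C * (1 + ‖y‖ ^ 2)⁻¹ := by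
  obtain ⟨C₀, hC₀pos, hC₀⟩ := u.decay 0 0
  obtain ⟨C₂, hC₂pos, hC₂⟩ := u.decay 2 0
  refine ⟨C₀ + C₂, by positivity, fun y => ?_⟩
  have h0 := hC₀ y; have h2 := hC₂ y
  simp only [norm_iteratedFDeriv_zero, pow_zero, one_mul] at h0 h2
  rw [← div_eq_mul_inv, le_div_iff₀ (by positivity)]
  nlinarith [norm_nonneg (u y), norm_nonneg y]

lemma line_bound (u : S3) : ∃ C : ℝ, 0 ≤ C ∧ ∀ (x : E3) (i : Fin 3) (t : ℝ),
    ‖u (upd x i t)‖ ≤ C * (1 + t ^ 2)⁻¹ := by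
  obtain ⟨C, hC0, hC⟩ := schwartz_decay_bound u
  refine ⟨C, hC0, fun x i t => (hC _).trans ?_⟩
  apply mul_le_mul_of_nonneg_left _ hC0
  apply inv_anti₀ (by positivity)
  nlinarith [abs_le_norm_upd x i t, abs_nonneg t, norm_nonneg (upd x i t), sq_abs t]

/-- The fundamental-theorem-of-calculus step: a Schwartz function is pointwise dominated by the
integral of its `i`-th partial derivative along the `i`-th coordinate line. -/
lemma step (g : S3) (i : Fin 3) (x : E3) :
    (‖g x‖₊ : ℝ≥0∞) ≤ ∫⁻ t : ℝ, (‖(pd3 i g) (upd x i t)‖₊ : ℝ≥0∞) := by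
  set e : E3 := EuclideanSpace.single i 1 with he
  set c : ℝ := (((MeasurableEquiv.toLp 2 (Fin 3 → ℝ)).symm) x) i with hc
  set φ' : ℝ → ℝ := fun t => (pd3 i g) (upd x i t) with hφ'
  have hupd_cont : Continuous fun t => upd x i t := by
    simp only [upd_eq_add]
    fun_prop
  have hcont : Continuous φ' := (pd3 i g).continuous.comp hupd_cont
  obtain ⟨C, hC0, hC⟩ := line_bound (pd3 i g)
  have hmaj : Integrable (fun t : ℝ => C * (1 + t ^ 2)⁻¹) := integrable_inv_one_add_sq.const_mul C
  have hint : Integrable φ' := by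
    refine hmaj.mono' hcont.aestronglyMeasurable (Filter.Eventually.of_forall fun t => ?_)
    exact hC x i t
  have hderiv : ∀ t : ℝ, HasDerivAt (fun s => g (upd x i s)) (φ' t) t := by
    intro t
    have h1 : HasDerivAt (fun s : ℝ => x + (s - c) • e) e t := by
      simpa using (((hasDerivAt_id t).sub_const c).smul_const e).const_add x
    have h1' : HasDerivAt (fun s : ℝ => upd x i s) e t := by
      simp only [hc, he] at h1 ⊢
      simpa only [← upd_eq_add] using h1
    have h2 := (g.differentiableAt.hasFDerivAt).comp_hasDerivAt t h1'
    have h3 : fderiv ℝ g (upd x i t) e = φ' t := by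
      simp [hφ', pd3, SchwartzMap.lineDerivOp_apply_eq_fderiv, he]
    rw [h3] at h2; exact h2
  have htend : Filter.Tendsto (fun t => g (upd x i t)) Filter.atBot (nhds 0) := by
    obtain ⟨C', hC'0, hC'⟩ := line_bound g
    apply squeeze_zero_norm (fun t => hC' x i t)
    have h1 : Filter.Tendsto (fun t : ℝ => 1 + t ^ 2) Filter.atBot Filter.atTop := by
      apply Filter.tendsto_atTop_add_const_left
      have : Filter.Tendsto (fun t : ℝ => |t| ^ 2) Filter.atBot Filter.atTop :=
        (Filter.tendsto_pow_atTop (two_ne_zero : (2:ℕ) ≠ 0)).comp Filter.tendsto_abs_atBot_atTop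
      simpa [sq_abs] using this
    simpa using (h1.inv_tendsto_atTop).const_mul C'
  have key : ∫ t in Set.Iic c, φ' t = g x := by
    rw [integral_Iic_of_hasDerivAt_of_tendsto' (fun t _ => hderiv t) hint.integrableOn htend]
    rw [upd_self, sub_zero]
  calc (‖g x‖₊ : ℝ≥0∞) = ENNReal.ofReal ‖g x‖ := (ofReal_norm _).symm
    _ ≤ ENNReal.ofReal (∫ t, ‖φ' t‖) := by
        apply ENNReal.ofReal_le_ofReal
        rw [← key]
        refine (norm_integral_le_integral_norm _).trans ?_
        exact setIntegral_le_integral hint.norm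
          (Filter.Eventually.of_forall fun t => norm_nonneg _)
    _ = ∫⁻ t, (‖φ' t‖₊ : ℝ≥0∞) := ofReal_integral_norm_eq_lintegral_enorm hint

lemma schwartz_hasTemperateGrowth (f : S3) : Function.HasTemperateGrowth (⇑f) := by
  refine ⟨f.smooth', fun n => ⟨0, SchwartzMap.seminorm ℝ 0 n f, fun x => ?_⟩⟩
  simpa using norm_iteratedFDeriv_le_seminorm ℝ f n x

/-- Pointwise product of two Schwartz functions. -/
def mulS (u v : S3) : S3 :=
  SchwartzMap.bilinLeftCLM (ContinuousLinearMap.mul ℝ ℝ) (schwartz_hasTemperateGrowth v) u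

@[simp] lemma mulS_apply (u v : S3) (x : E3) : mulS u v x = u x * v x := rfl

lemma pd3_add (i : Fin 3) (u v : S3) : pd3 i (u + v) = pd3 i u + pd3 i v := by
  unfold pd3; exact LineDerivAdd.lineDerivOp_add _ u v

lemma pd3_mulS (i : Fin 3) (u v : S3) :
    pd3 i (mulS u v) = mulS (pd3 i u) v + mulS u (pd3 i v) := by
  ext x
  have h : (⇑(mulS u v) : E3 → ℝ) = fun y => u y * v y := funext fun y => rfl
  simp only [pd3, SchwartzMap.lineDerivOp_apply_eq_fderiv, SchwartzMap.add_apply, mulS_apply]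
  rw [h, fderiv_fun_mul u.differentiableAt v.differentiableAt]
  simp [ContinuousLinearMap.add_apply, ContinuousLinearMap.smul_apply, smul_eq_mul]
  ring

lemma fubini3 (h : S3) (x : E3) :
    (∫⁻ t₂ : ℝ, ∫⁻ t₁ : ℝ, ∫⁻ t₀ : ℝ,
      (‖h (upd (upd (upd x 2 t₂) 1 t₁) 0 t₀)‖₊ : ℝ≥0∞)) = ∫⁻ y, (‖h y‖₊ : ℝ≥0∞) := by
  set eqv := (MeasurableEquiv.toLp 2 (Fin 3 → ℝ)).symm with heqv
  set k : (Fin 3 → ℝ) → ℝ≥0∞ := fun y => (‖h (eqv.symm y)‖₊ : ℝ≥0∞) with hk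
  have hkm : Measurable k := (h.continuous.measurable.comp eqv.symm.measurable).enorm
  have hR : (∫⁻ y, (‖h y‖₊ : ℝ≥0∞)) = ∫⁻ y, k y := by
    rw [← (EuclideanSpace.volume_preserving_symm_measurableEquiv_toLp (Fin 3)).lintegral_comp hkm]
    simp [hk, ← heqv]
  have huniv : (Finset.univ : Finset (Fin 3)) = insert 2 (insert 1 {0}) := by decide
  have hvol : (volume : Measure (Fin 3 → ℝ)) = Measure.pi fun _ => volume :=
    MeasureTheory.volume_pi
  rw [hR, hvol, MeasureTheory.lintegral_eq_lmarginal_univ (eqv x), huniv,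
    MeasureTheory.lmarginal_insert _ hkm (by decide)]
  refine lintegral_congr fun t₂ => ?_
  rw [MeasureTheory.lmarginal_insert _ hkm (by decide)]
  refine lintegral_congr fun t₁ => ?_
  have hsing : ({0} : Finset (Fin 3)) = insert 0 ∅ := rfl
  rw [hsing, MeasureTheory.lmarginal_insert _ hkm (by decide)]
  refine lintegral_congr fun t₀ => ?_
  rw [MeasureTheory.lmarginal_empty]
  rfl

lemma eLpNorm_two_ne_top (u : S3) : eLpNorm u 2 volume ≠ ∞ := by
  obtain ⟨M, hMpos, hM⟩ := u.decay 0 0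
  have hM' : ∀ y, ‖u y‖ ≤ M := fun y => by simpa using hM y
  rw [eLpNorm_eq_lintegral_rpow_enorm_toReal (by norm_num) (by norm_num)]
  apply ENNReal.rpow_ne_top_of_nonneg (by positivity)
  have hb : ∀ y : E3, (‖u y‖₊ : ℝ≥0∞) ^ (ENNReal.toReal 2) ≤ ENNReal.ofReal M * ‖u y‖₊ := by
    intro y
    have h1 : (‖u y‖₊ : ℝ≥0∞) ≤ ENNReal.ofReal M := by
      rw [← enorm_eq_nnnorm, ← ofReal_norm]
      exact ENNReal.ofReal_le_ofReal (hM' y)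
    have h2 : (‖u y‖₊ : ℝ≥0∞) ^ (ENNReal.toReal 2) = ‖u y‖₊ * ‖u y‖₊ := by
      rw [ENNReal.toReal_ofNat, ENNReal.rpow_two, sq]
    rw [h2]
    exact mul_le_mul_left h1 _
  have hint : (∫⁻ y, (‖u y‖₊ : ℝ≥0∞)) ≠ ∞ := (u.integrable (μ := volume)).2.ne
  refine ne_top_of_le_ne_top ?_ (lintegral_mono hb)
  rw [lintegral_const_mul (f := fun y => (‖u y‖₊ : ℝ≥0∞)) _ (u.continuous.measurable.enorm)]
  exact ENNReal.mul_ne_top ENNReal.ofReal_ne_top hint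

lemma ofReal_L2 (u : S3) : ENNReal.ofReal (L2 u) = eLpNorm u 2 volume := by
  rw [L2, ENNReal.ofReal_toReal (eLpNorm_two_ne_top u)]

lemma holderS (u v : S3) :
    (∫⁻ y, (‖u y‖₊ : ℝ≥0∞) * ‖v y‖₊) ≤ ENNReal.ofReal (L2 u) * ENNReal.ofReal (L2 v) := by
  rw [ofReal_L2, ofReal_L2]
  have hpq : Real.HolderConjugate 2 2 := Real.HolderConjugate.two_two
  have h := ENNReal.lintegral_mul_le_Lp_mul_Lq volume hpq
    (u.continuous.measurable.enorm.aemeasurable) (v.continuous.measurable.enorm.aemeasurable)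
  refine h.trans_eq ?_
  rw [eLpNorm_eq_lintegral_rpow_enorm_toReal (by norm_num) (by norm_num),
    eLpNorm_eq_lintegral_rpow_enorm_toReal (by norm_num) (by norm_num)]
  norm_num

lemma lint_mulS_le (u v : S3) :
    (∫⁻ y, (‖(mulS u v) y‖₊ : ℝ≥0∞)) ≤ ENNReal.ofReal (L2 u) * ENNReal.ofReal (L2 v) := by
  refine le_trans (le_of_eq (lintegral_congr fun y => ?_)) (holderS u v)
  simp [nnnorm_mul]

lemma lint_add_le (A B : S3) :
    (∫⁻ y, (‖(A + B) y‖₊ : ℝ≥0∞))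
      ≤ (∫⁻ y, (‖A y‖₊ : ℝ≥0∞)) + ∫⁻ y, (‖B y‖₊ : ℝ≥0∞) := by
  calc (∫⁻ y, (‖(A + B) y‖₊ : ℝ≥0∞)) ≤ ∫⁻ y, ((‖A y‖₊ : ℝ≥0∞) + ‖B y‖₊) := by
        refine lintegral_mono fun y => ?_
        rw [SchwartzMap.add_apply, ← ENNReal.coe_add]
        exact ENNReal.coe_le_coe.mpr (nnnorm_add_le _ _)
    _ = (∫⁻ y, (‖A y‖₊ : ℝ≥0∞)) + ∫⁻ y, (‖B y‖₊ : ℝ≥0∞) :=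
        lintegral_add_left (A.continuous.measurable.enorm) _

lemma HtanSq_nonneg (k : ℕ) (f : S3) : 0 ≤ HtanSq k f :=
  Finset.sum_nonneg fun _ _ => sq_nonneg _

lemma L2_le_sqrt (a b : ℕ) (hab : (a, b) ∈ multiIdx2 2) (g : S3) :
    L2 (dtan a b g) ≤ Real.sqrt (HtanSq 2 g) := by
  have hsum : L2 (dtan a b g) ^ 2 ≤ HtanSq 2 g := by
    rw [HtanSq]
    have := Finset.single_le_sum (s := multiIdx2 2)
      (f := fun p : ℕ × ℕ => L2 (dtan p.1 p.2 g) ^ 2)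
      (fun p _ => sq_nonneg (L2 (dtan p.1 p.2 g))) hab
    simpa using this
  calc L2 (dtan a b g) = Real.sqrt (L2 (dtan a b g) ^ 2) :=
        (Real.sqrt_sq ENNReal.toReal_nonneg).symm
    _ ≤ Real.sqrt (HtanSq 2 g) := Real.sqrt_le_sqrt hsum

@[simp] lemma dtan_00 (g : S3) : dtan 0 0 g = g := rfl
@[simp] lemma dtan_10 (g : S3) : dtan 1 0 g = pd3 0 g := rfl
@[simp] lemma dtan_01 (g : S3) : dtan 0 1 g = pd3 1 g := rfl
@[simp] lemma dtan_11 (g : S3) : dtan 1 1 g = pd3 0 (pd3 1 g) := rfl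

/-- The key pointwise estimate `|f(x)|² ≤ 8 √X √Y`. -/
lemma pointwise_bound (f : S3) (x : E3) :
    ENNReal.ofReal (‖f x‖ ^ 2)
      ≤ ENNReal.ofReal (8 * Real.sqrt (HtanSq 2 f) * Real.sqrt (HtanSq 2 (pd3 2 f))) := by
  set p := pd3 2 f with hp
  set SX := ENNReal.ofReal (Real.sqrt (HtanSq 2 f)) with hSX
  set SY := ENNReal.ofReal (Real.sqrt (HtanSq 2 p)) with hSY
  have hXf : ∀ (a b : ℕ), (a, b) ∈ multiIdx2 2 →
      ENNReal.ofReal (L2 (dtan a b f)) ≤ SX :=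
    fun a b hab => ENNReal.ofReal_le_ofReal (L2_le_sqrt a b hab f)
  have hYp : ∀ (a b : ℕ), (a, b) ∈ multiIdx2 2 →
      ENNReal.ofReal (L2 (dtan a b p)) ≤ SY :=
    fun a b hab => ENNReal.ofReal_le_ofReal (L2_le_sqrt a b hab p)
  have h00 : ENNReal.ofReal (L2 f) ≤ SX := hXf 0 0 (by norm_num [multiIdx2])
  have h10 : ENNReal.ofReal (L2 (pd3 0 f)) ≤ SX := hXf 1 0 (by norm_num [multiIdx2])
  have h01 : ENNReal.ofReal (L2 (pd3 1 f)) ≤ SX := hXf 0 1 (by norm_num [multiIdx2])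
  have h11 : ENNReal.ofReal (L2 (pd3 0 (pd3 1 f))) ≤ SX := hXf 1 1 (by norm_num [multiIdx2])
  have g00 : ENNReal.ofReal (L2 p) ≤ SY := hYp 0 0 (by norm_num [multiIdx2])
  have g10 : ENNReal.ofReal (L2 (pd3 0 p)) ≤ SY := hYp 1 0 (by norm_num [multiIdx2])
  have g01 : ENNReal.ofReal (L2 (pd3 1 p)) ≤ SY := hYp 0 1 (by norm_num [multiIdx2])
  have g11 : ENNReal.ofReal (L2 (pd3 0 (pd3 1 p))) ≤ SY := hYp 1 1 (by norm_num [multiIdx2])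
  set Fsq := mulS f f with hFsq
  -- expansion of the third mixed derivative of f²
  have e1 : pd3 2 Fsq = mulS p f + mulS f p := pd3_mulS 2 f f
  have e3 : pd3 0 (pd3 1 (pd3 2 Fsq)) =
      (((mulS (pd3 0 (pd3 1 p)) f + mulS (pd3 1 p) (pd3 0 f)) +
        (mulS (pd3 0 p) (pd3 1 f) + mulS p (pd3 0 (pd3 1 f)))) +
       ((mulS (pd3 0 (pd3 1 f)) p + mulS (pd3 1 f) (pd3 0 p)) +
        (mulS (pd3 0 f) (pd3 1 p) + mulS f (pd3 0 (pd3 1 p))))) := by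
    rw [e1]
    simp only [pd3_add, pd3_mulS]
  -- bound each of the eight terms
  have bnd : ∀ (u v : S3), ENNReal.ofReal (L2 u) ≤ SX → ENNReal.ofReal (L2 v) ≤ SY →
      (∫⁻ y, (‖(mulS u v) y‖₊ : ℝ≥0∞)) ≤ SX * SY := fun u v hu hv =>
    (lint_mulS_le u v).trans (mul_le_mul' hu hv)
  have bnd' : ∀ (u v : S3), ENNReal.ofReal (L2 v) ≤ SX → ENNReal.ofReal (L2 u) ≤ SY →
      (∫⁻ y, (‖(mulS u v) y‖₊ : ℝ≥0∞)) ≤ SX * SY := fun u v hv hu => by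
    rw [mul_comm]
    exact (lint_mulS_le u v).trans (mul_le_mul' hu hv)
  have hmain : (∫⁻ y, (‖(pd3 0 (pd3 1 (pd3 2 Fsq))) y‖₊ : ℝ≥0∞)) ≤ 8 * (SX * SY) := by
    rw [e3]
    refine le_trans (lint_add_le _ _) ?_
    refine le_trans (add_le_add (lint_add_le _ _) (lint_add_le _ _)) ?_
    refine le_trans (add_le_add
      (add_le_add (lint_add_le _ _) (lint_add_le _ _))
      (add_le_add (lint_add_le _ _) (lint_add_le _ _))) ?_
    refine le_trans (add_le_add
      (add_le_add (add_le_add (bnd' _ _ h00 g11) (bnd' _ _ h10 g01))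
        (add_le_add (bnd' _ _ h01 g10) (bnd' _ _ h11 g00)))
      (add_le_add (add_le_add (bnd _ _ h11 g00) (bnd _ _ h01 g10))
        (add_le_add (bnd _ _ h10 g01) (bnd _ _ h00 g11)))) ?_
    apply le_of_eq
    ring
  -- chain of one-dimensional estimates
  calc ENNReal.ofReal (‖f x‖ ^ 2) = (‖Fsq x‖₊ : ℝ≥0∞) := by
        rw [← enorm_eq_nnnorm, ← ofReal_norm]
        congr 1
        simp [hFsq, Real.norm_eq_abs, sq_abs, abs_mul, sq]
    _ ≤ ∫⁻ t₂, (‖(pd3 2 Fsq) (upd x 2 t₂)‖₊ : ℝ≥0∞) := step Fsq 2 x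
    _ ≤ ∫⁻ t₂, ∫⁻ t₁, (‖(pd3 1 (pd3 2 Fsq)) (upd (upd x 2 t₂) 1 t₁)‖₊ : ℝ≥0∞) :=
        lintegral_mono fun t₂ => step (pd3 2 Fsq) 1 _
    _ ≤ ∫⁻ t₂, ∫⁻ t₁, ∫⁻ t₀,
          (‖(pd3 0 (pd3 1 (pd3 2 Fsq))) (upd (upd (upd x 2 t₂) 1 t₁) 0 t₀)‖₊ : ℝ≥0∞) :=
        lintegral_mono fun t₂ => lintegral_mono fun t₁ => step (pd3 1 (pd3 2 Fsq)) 0 _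
    _ = ∫⁻ y, (‖(pd3 0 (pd3 1 (pd3 2 Fsq))) y‖₊ : ℝ≥0∞) := fubini3 _ x
    _ ≤ 8 * (SX * SY) := hmain
    _ = ENNReal.ofReal (8 * Real.sqrt (HtanSq 2 f) * Real.sqrt (HtanSq 2 (pd3 2 f))) := by
        rw [hSX, hSY, ← hp, ← ENNReal.ofReal_mul (Real.sqrt_nonneg _),
          show (8:ℝ) * Real.sqrt (HtanSq 2 f) * Real.sqrt (HtanSq 2 p)
            = 8 * (Real.sqrt (HtanSq 2 f) * Real.sqrt (HtanSq 2 p)) by ring,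
          ENNReal.ofReal_mul (by norm_num : (0:ℝ) ≤ 8), ENNReal.ofReal_ofNat]

/-- Tangential Sobolev embedding: `‖f‖_{L^∞} ≲ ‖f‖_{H²_tan}^{1/2} ‖∂₃f‖_{H²_tan}^{1/2}`. -/
theorem tangential_sobolev_embedding :
    ∃ C : ℝ, 0 < C ∧ ∀ f : SchwartzMap (EuclideanSpace ℝ (Fin 3)) ℝ,
      Linf f ≤ C * HtanSq 2 f ^ (1/4 : ℝ) * HtanSq 2 (pd3 2 f) ^ (1/4 : ℝ) := by
  refine ⟨3, by norm_num, fun f => ?_⟩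
  have hX0 : 0 ≤ HtanSq 2 f := HtanSq_nonneg 2 f
  have hY0 : 0 ≤ HtanSq 2 (pd3 2 f) := HtanSq_nonneg 2 (pd3 2 f)
  set X := HtanSq 2 f with hX
  set Y := HtanSq 2 (pd3 2 f) with hY
  have hpt : ∀ x : E3, ‖f x‖ ≤ 3 * X ^ (1/4 : ℝ) * Y ^ (1/4 : ℝ) := by
    intro x
    have h1 : ‖f x‖ ^ 2 ≤ 8 * Real.sqrt X * Real.sqrt Y := by
      have := pointwise_bound f x
      rwa [ENNReal.ofReal_le_ofReal_iff (by positivity)] at this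
    have h2 : ‖f x‖ ≤ Real.sqrt (8 * Real.sqrt X * Real.sqrt Y) := by
      rw [← Real.sqrt_sq (norm_nonneg (f x))]
      exact Real.sqrt_le_sqrt h1
    have h3 : Real.sqrt (8 * Real.sqrt X * Real.sqrt Y)
        = Real.sqrt 8 * Real.sqrt (Real.sqrt X) * Real.sqrt (Real.sqrt Y) := by
      rw [Real.sqrt_mul (by positivity), Real.sqrt_mul (by norm_num)]
    have h4 : Real.sqrt (Real.sqrt X) = X ^ (1/4 : ℝ) := by
      rw [Real.sqrt_eq_rpow, Real.sqrt_eq_rpow, ← Real.rpow_mul hX0]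
      norm_num
    have h5 : Real.sqrt (Real.sqrt Y) = Y ^ (1/4 : ℝ) := by
      rw [Real.sqrt_eq_rpow, Real.sqrt_eq_rpow, ← Real.rpow_mul hY0]
      norm_num
    have h8 : Real.sqrt 8 ≤ 3 := by
      rw [show (3:ℝ) = Real.sqrt 9 by
        rw [show (9:ℝ) = 3 ^ 2 by norm_num, Real.sqrt_sq (by norm_num)]]
      exact Real.sqrt_le_sqrt (by norm_num)
    calc ‖f x‖ ≤ Real.sqrt (8 * Real.sqrt X * Real.sqrt Y) := h2
      _ = Real.sqrt 8 * (X ^ (1/4 : ℝ) * Y ^ (1/4 : ℝ)) := by rw [h3, h4, h5]; ring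
      _ ≤ 3 * (X ^ (1/4 : ℝ) * Y ^ (1/4 : ℝ)) := by
          apply mul_le_mul_of_nonneg_right h8
          positivity
      _ = 3 * X ^ (1/4 : ℝ) * Y ^ (1/4 : ℝ) := by ring
  have hbound := eLpNormEssSup_le_of_ae_bound (μ := (volume : Measure E3))
    (f := (⇑f : E3 → ℝ)) (Filter.Eventually.of_forall hpt)
  rw [Linf, eLpNorm_exponent_top]
  exact ENNReal.toReal_le_of_le_ofReal (by positivity) hbound

end
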